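/- For R ∈ Θ (i.e., R ∈ Θ_k for some k ∈ ℕ) and any word e ∈ E*, either both successors of e lie in the component set {R}, or neither does; that is, Succ(e) ∩ {R} = ∅ or Succ(e) ∩ {R} = Succ(e). -/
import Mathlib


/-- Words over the two-letter alphabet `E = {-,+}`, encoded as lists of booleans
(`false` for `-`, `true` for `+`); the empty list is the empty word `o`. -/
abbrev Word := List Bool

/-- The two successors of a word `e`: `e-` and `e+`. -/
def Succ (e : Word) : Set Word := {e ++ [false], e ++ [true]}

/-- `IsTheta k R` says that `(R 0, ..., R (2k))` is an element of `Θ_k`: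
the components are pairwise distinct words, `R 0` is the empty word, and for
every `l ∈ {1,...,k}` there is `j ≤ 2l-2` with
`(R (2l-1), R (2l)) = (R j ++ [-], R j ++ [+])`. -/
def IsTheta (k : ℕ) (R : ℕ → Word) : Prop :=
  R 0 = [] ∧ Set.InjOn R (Set.Iic (2 * k)) ∧
    ∀ l, 1 ≤ l → l ≤ k → ∃ j ≤ 2 * l - 2,
      R (2 * l - 1) = R j ++ [false] ∧ R (2 * l) = R j ++ [true]

/-- The set `{R}` of components of the tuple `(R 0, ..., R (2k))`. -/
def comps (k : ℕ) (R : ℕ → Word) : Set Word := R '' Set.Iic (2 * k)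

/-- The set of leaves `L(R)`: components of `R` none of whose successors is a
component of `R`. -/
def leaves (k : ℕ) (R : ℕ → Word) : Set Word :=
  {r ∈ comps k R | Succ r ∩ comps k R = ∅}

/-- For `R ∈ Θ_k` and any word `e`, either both successors of `e` are components
of `R` or neither is. -/
theorem succ_inter_comps (k : ℕ) (R : ℕ → Word) (hR : IsTheta k R) (e : Word) :
    Succ e ∩ comps k R = ∅ ∨ Succ e ∩ comps k R = Succ e := by
  obtain ⟨h0, _hinj, hpair⟩ := hR
  have key : ∀ b : Bool, e ++ [b] ∈ comps k R →
      ∀ b' : Bool, e ++ [b'] ∈ comps k R := by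
    intro b hb b'
    obtain ⟨i, hi, hRi⟩ := hb
    have hi0 : i ≠ 0 := by
      intro h
      rw [h, h0] at hRi
      exact (List.append_ne_nil_of_right_ne_nil e (by simp)) hRi.symm
    set l := (i + 1) / 2 with hl
    have hl1 : 1 ≤ l := Nat.one_le_div_iff (by norm_num) |>.mpr (by omega)
    have hlk : l ≤ k := by
      simp only [Set.mem_Iic] at hi; omega
    obtain ⟨j, _hj, hjf, hjt⟩ := hpair l hl1 hlk
    have hcase : i = 2 * l - 1 ∨ i = 2 * l := by omega
    have heq : e = R j := by
      rcases hcase with h | h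
      · rw [h, hjf] at hRi
        exact (List.append_inj_left' hRi.symm (by simp))
      · rw [h, hjt] at hRi
        exact (List.append_inj_left' hRi.symm (by simp))
    cases b'
    · exact ⟨2 * l - 1, by simp only [Set.mem_Iic] at hi ⊢; omega,
        by rw [hjf, heq]⟩
    · exact ⟨2 * l, by simp only [Set.mem_Iic] at hi ⊢; omega,
        by rw [hjt, heq]⟩
  by_cases h : Succ e ∩ comps k R = ∅
  · exact Or.inl h
  · right
    obtain ⟨x, hx⟩ := Set.nonempty_iff_ne_empty.mpr h
    have hxb : ∃ b : Bool, e ++ [b] ∈ comps k R := by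
      rcases hx.1 with h1 | h1 <;> exact ⟨_, h1 ▸ hx.2⟩
    obtain ⟨b, hb⟩ := hxb
    apply Set.inter_eq_left.mpr
    intro y hy
    rcases hy with h1 | h1 <;> · rw [h1]; exact key b hb _
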